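/- Let D be a delta-matroid on [n]. If S is an independent admissible set with a(S) = 0, and S' is an admissible set with S'⁺ ⊆ S⁺ and S'⁻ ⊆ S⁻, then S' is independent in D and a(S') = 0. Consequently, the independent sets S of D with a(S) = 0 form a simplicial complex. -/
import Mathlib


open Finset
open scoped symmDiff

/-- The rank-type function of a nonempty family `G` of subsets of `Fin n`, evaluated on an
admissible set `(Sp, Sn)`: `max_{F ∈ G} (|Sp ∩ F| + |Sn \ F| − |Sn ∩ F| − |Sp \ F|)`.
(Junk value `0` when the family is empty.) -/
noncomputable def gFam {n : ℕ} (G : Finset (Finset (Fin n))) (Sp Sn : Finset (Fin n)) : ℤ :=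
  if h : G.Nonempty then
    G.sup' h fun F => ((Sp ∩ F).card : ℤ) + ((Sn \ F).card : ℤ)
      - ((Sn ∩ F).card : ℤ) - ((Sp \ F).card : ℤ)
  else 0

/-- A delta-matroid on `[n]`: a nonempty family of subsets of `Fin n` (each `F` encoding the
size-`n` admissible set `(F, [n] \ F)`), satisfying the symmetric exchange axiom. -/
structure DeltaMatroid (n : ℕ) where
  feas : Finset (Finset (Fin n))
  nonempty : feas.Nonempty
  exchange : ∀ F₁ ∈ feas, ∀ F₂ ∈ feas, ∀ x ∈ F₁ ∆ F₂, ∃ y ∈ F₁ ∆ F₂, F₁ ∆ {x, y} ∈ feas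

/-- The rank function `g_D` of a delta-matroid, on admissible sets `(Sp, Sn)`. -/
noncomputable def DeltaMatroid.g {n : ℕ} (D : DeltaMatroid n) :
    Finset (Fin n) → Finset (Fin n) → ℤ :=
  gFam D.feas

/-- The number of `S`-active elements of an independent admissible set `S = (Sp, Sn)`:
with `T = [n] \ (Sp ∪ Sn)` and `𝓕(T) = {F \ T : F ∈ 𝓕}` the feasible sets of the projection
`D(T)`, an element `i ∈ Sp ∪ Sn` is `S`-active if `Sp ∆ {i} ∉ 𝓕(T)` and there is no
`j ∈ Sp ∪ Sn` with `j < i` and `Sp ∆ {i, j} ∈ 𝓕(T)`. -/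
noncomputable def activeCard {n : ℕ} (D : DeltaMatroid n) (Sp Sn : Finset (Fin n)) : ℕ :=
  Set.ncard {i : Fin n | i ∈ Sp ∪ Sn ∧
    Sp ∆ {i} ∉ D.feas.image (· \ ((univ : Finset (Fin n)) \ (Sp ∪ Sn))) ∧
    ¬∃ j ∈ Sp ∪ Sn, j < i ∧
      Sp ∆ {i, j} ∈ D.feas.image (· \ ((univ : Finset (Fin n)) \ (Sp ∪ Sn)))}

private lemma proj_mono {n : ℕ} (G : Finset (Finset (Fin n))) {U U' : Finset (Fin n)}
    (hU : U' ⊆ U) {X : Finset (Fin n)}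
    (hX : X ∈ G.image (· \ ((univ : Finset (Fin n)) \ U))) :
    X ∩ U' ∈ G.image (· \ ((univ : Finset (Fin n)) \ U')) := by
  obtain ⟨F, hF, rfl⟩ := Finset.mem_image.mp hX
  refine Finset.mem_image.mpr ⟨F, hF, ?_⟩
  ext x
  have := @hU x
  simp only [Finset.mem_sdiff, Finset.mem_inter, Finset.mem_univ, true_and, not_not]
  tauto

private lemma symmDiff_inter {n : ℕ} (A B U : Finset (Fin n)) :
    (A ∆ B) ∩ U = (A ∩ U) ∆ (B ∩ U) := by
  ext x
  simp only [Finset.mem_inter, Finset.mem_symmDiff]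
  tauto

/-- **Proposition (independent sets with no active elements form a simplicial complex).**
If `S` is independent with `a(S) = 0` and `S' ⊆ S` (componentwise), then `S'` is independent
with `a(S') = 0`. -/
theorem deltaMatroid_active_subset (n : ℕ) (D : DeltaMatroid n)
    (Sp Sn Sp' Sn' : Finset (Fin n)) (hS : Disjoint Sp Sn)
    (hind : ∃ F ∈ D.feas, Sp ⊆ F ∧ Disjoint Sn F) (ha : activeCard D Sp Sn = 0)
    (hp : Sp' ⊆ Sp) (hn : Sn' ⊆ Sn) :
    (∃ F ∈ D.feas, Sp' ⊆ F ∧ Disjoint Sn' F) ∧ activeCard D Sp' Sn' = 0 := by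
  obtain ⟨F₀, hF₀, hF₀p, hF₀n⟩ := hind
  refine ⟨⟨F₀, hF₀, hp.trans hF₀p, hF₀n.mono_left hn⟩, ?_⟩
  rw [activeCard, Set.ncard_eq_zero (Set.toFinite _)]
  rw [activeCard, Set.ncard_eq_zero (Set.toFinite _)] at ha
  ext i
  simp only [Set.mem_setOf_eq, Set.mem_empty_iff_false, iff_false]
  rintro ⟨hiU, hi1, hi2⟩
  have hiUS : i ∈ Sp ∪ Sn := by
    rcases Finset.mem_union.mp hiU with h | h
    · exact Finset.mem_union_left _ (hp h)
    · exact Finset.mem_union_right _ (hn h)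
  have hUsub : (Sp' ∪ Sn') ⊆ (Sp ∪ Sn) := Finset.union_subset_union hp hn
  have hSpU : Sp ∩ (Sp' ∪ Sn') = Sp' := by
    ext x
    simp only [Finset.mem_inter, Finset.mem_union]
    constructor
    · rintro ⟨hx, hx' | hx'⟩
      · exact hx'
      · exact absurd (hn hx') (Finset.disjoint_left.mp hS hx)
    · intro hx; exact ⟨hp hx, Or.inl hx⟩
  have hmem := Set.eq_empty_iff_forall_notMem.mp ha i
  have hcases : Sp ∆ {i} ∈ D.feas.image (· \ ((univ : Finset (Fin n)) \ (Sp ∪ Sn))) ∨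
      ∃ j ∈ Sp ∪ Sn, j < i ∧
        Sp ∆ {i, j} ∈ D.feas.image (· \ ((univ : Finset (Fin n)) \ (Sp ∪ Sn))) := by
    by_contra hc
    rw [not_or] at hc
    exact hmem ⟨hiUS, hc.1, hc.2⟩
  have hiI : ({i} : Finset (Fin n)) ∩ (Sp' ∪ Sn') = {i} := by
    rw [Finset.inter_eq_left]
    simpa using hiU
  rcases hcases with hA | ⟨j, hjU, hji, hB⟩
  · have h1 := proj_mono D.feas hUsub hA
    rw [symmDiff_inter, hSpU, hiI] at h1
    exact hi1 h1
  · have h2 := proj_mono D.feas hUsub hB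
    rw [symmDiff_inter, hSpU] at h2
    by_cases hj : j ∈ Sp' ∪ Sn'
    · have hij : ({i, j} : Finset (Fin n)) ∩ (Sp' ∪ Sn') = {i, j} := by
        rw [Finset.inter_eq_left]
        intro x hx
        rcases Finset.mem_insert.mp hx with rfl | hx
        · exact hiU
        · rw [Finset.mem_singleton.mp hx]; exact hj
      rw [hij] at h2
      exact hi2 ⟨j, hj, hji, h2⟩
    · have hij : ({i, j} : Finset (Fin n)) ∩ (Sp' ∪ Sn') = {i} := by
        ext x
        simp only [Finset.mem_inter, Finset.mem_insert, Finset.mem_singleton]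
        constructor
        · rintro ⟨rfl | rfl, hx⟩
          · rfl
          · exact absurd hx hj
        · rintro rfl; exact ⟨Or.inl rfl, hiU⟩
      rw [hij] at h2
      exact hi1 h2
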